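/- If G = Cay(Γ,S) is an integral Cayley graph over a finite abelian group Γ and D is a set of nonnegative integers (possibly including ∞), then the distance power G^D (vertices x,y adjacent iff d(x,y) ∈ D) is again a Cayley graph Cay(Γ, S^{(D)}) over Γ for some symmetric set S^{(D)} ∈ B(Γ); in particular G^D is integral. -/

import Mathlib

open Pointwise

/-- The Boolean algebra of subsets of `Γ` generated by the subgroups of `Γ`. -/
inductive InB (Γ : Type*) [AddGroup Γ] : Set Γ → Prop
  | subgroup (H : AddSubgroup Γ) : InB Γ (H : Set Γ)
  | compl {S : Set Γ} : InB Γ S → InB Γ Sᶜ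
  | union {S T : Set Γ} : InB Γ S → InB Γ T → InB Γ (S ∪ T)

/-- `Atom a` is the set of elements generating the same cyclic subgroup as `a`. -/
def Atom {Γ : Type*} [AddGroup Γ] (a : Γ) : Set Γ :=
  {b | AddSubgroup.zmultiples a = AddSubgroup.zmultiples b}


open Polynomial

section Cyclo

variable {ι : Type*}

private lemma pow_mod_eq' {R : Type*} [Monoid R] {x : R} {n : ℕ} (h : x ^ n = 1) (m : ℕ) :
    x ^ (m % n) = x ^ m := by
  conv_rhs => rw [← Nat.div_add_mod m n, pow_add, pow_mul, h, one_pow, one_mul]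

private lemma keyA (t : Finset ι) {n : ℕ} (hn : 0 < n) (f : ι → ℂ)
    (hf : ∀ i ∈ t, f i ^ n = 1) (k : ℤ) (hk : ∑ i ∈ t, f i = (k : ℂ))
    {m : ℕ} (hm : Nat.Coprime m n) :
    ∑ i ∈ t, f i ^ m = ∑ i ∈ t, f i := by
  haveI : NeZero n := ⟨hn.ne'⟩
  set N : ℕ+ := ⟨n, hn⟩ with hN
  set K := CyclotomicField N ℚ with hK
  haveI : IsCyclotomicExtension {(N : ℕ)} ℚ K :=
    CyclotomicField.instIsCyclotomicExtensionSingletonNatSetOfCharZero (N : ℕ) ℚ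
  haveI : FiniteDimensional ℚ K := IsCyclotomicExtension.finiteDimensional {(N : ℕ)} ℚ K
  haveI : Algebra.IsAlgebraic ℚ K := Algebra.IsAlgebraic.of_finite ℚ K
  set φ : K →ₐ[ℚ] ℂ := IsAlgClosed.lift with hφdef
  have hφ : Function.Injective φ := φ.toRingHom.injective
  set ζ : K := IsCyclotomicExtension.zeta N ℚ K with hζdef
  have hζ : IsPrimitiveRoot ζ n := IsCyclotomicExtension.zeta_spec N ℚ K
  have hζC : IsPrimitiveRoot (φ ζ) n := hζ.map_of_injective hφ
  have hex : ∀ i : ι, ∃ a : ℕ, i ∈ t → φ ζ ^ a = f i := by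
    intro i
    by_cases hi : i ∈ t
    · obtain ⟨a, _, ha⟩ := hζC.eq_pow_of_pow_eq_one (hf i hi)
      exact ⟨a, fun _ => ha⟩
    · exact ⟨0, fun h => absurd h hi⟩
  choose a ha using hex
  set F : ι → K := fun i => ζ ^ a i with hF
  have hφF : ∀ i ∈ t, φ (F i) = f i := by
    intro i hi; rw [hF]; simp only [map_pow]; exact ha i hi
  have hFn : ∀ i, F i ^ n = 1 := by
    intro i; show (ζ ^ a i) ^ n = 1
    rw [← pow_mul, mul_comm, pow_mul, hζ.pow_eq_one, one_pow]
  have hirr : Irreducible (cyclotomic N ℚ) := cyclotomic.irreducible_rat N.pos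
  set u : (ZMod N)ˣ := ZMod.unitOfCoprime m hm with hu
  set σ : K ≃ₐ[ℚ] K := (IsCyclotomicExtension.autEquivPow K hirr).symm u with hσ
  have h1 : (IsCyclotomicExtension.autEquivPow K hirr) σ = u := by
    rw [hσ]; exact MulEquiv.apply_symm_apply _ _
  have h2 : (IsCyclotomicExtension.zeta_spec N ℚ K).autToPow ℚ σ = u := h1
  have hσζ : σ ζ = ζ ^ (m % n) := by
    have h3 := (IsCyclotomicExtension.zeta_spec N ℚ K).autToPow_spec ℚ σ
    rw [h2] at h3
    rw [← h3]
    congr 1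
    exact ZMod.val_natCast (n := N) m
  have hσF : ∀ i, σ (F i) = F i ^ m := by
    intro i
    show σ (ζ ^ a i) = (ζ ^ a i) ^ m
    rw [map_pow, hσζ, pow_right_comm]
    exact pow_mod_eq' (hFn i) m
  have hz : ∑ i ∈ t, F i = (k : K) := by
    apply hφ
    rw [map_sum, map_intCast]
    rw [← hk]
    exact Finset.sum_congr rfl hφF
  calc ∑ i ∈ t, f i ^ m = ∑ i ∈ t, φ (σ (F i)) := by
        refine Finset.sum_congr rfl fun i hi => ?_
        rw [hσF, map_pow, hφF i hi]
      _ = φ (σ (∑ i ∈ t, F i)) := by rw [map_sum, map_sum]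
      _ = φ (σ (k : K)) := by rw [hz]
      _ = φ (k : K) := by rw [map_intCast σ]
      _ = (k : ℂ) := by rw [map_intCast]
      _ = ∑ i ∈ t, f i := hk.symm

private lemma keyB (t : Finset ι) {n : ℕ} (hn : 0 < n) (f : ι → ℂ)
    (hf : ∀ i ∈ t, f i ^ n = 1)
    (h : ∀ m : ℕ, Nat.Coprime m n → ∑ i ∈ t, f i ^ m = ∑ i ∈ t, f i) :
    ∃ k : ℤ, ∑ i ∈ t, f i = (k : ℂ) := by
  haveI : NeZero n := ⟨hn.ne'⟩
  set N : ℕ+ := ⟨n, hn⟩ with hN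
  set K := CyclotomicField N ℚ with hK
  haveI : IsCyclotomicExtension {(N : ℕ)} ℚ K :=
    CyclotomicField.instIsCyclotomicExtensionSingletonNatSetOfCharZero (N : ℕ) ℚ
  haveI : FiniteDimensional ℚ K := IsCyclotomicExtension.finiteDimensional {(N : ℕ)} ℚ K
  haveI : Algebra.IsAlgebraic ℚ K := Algebra.IsAlgebraic.of_finite ℚ K
  haveI : IsGalois ℚ K := IsCyclotomicExtension.isGalois {(N : ℕ)} ℚ K
  set φ : K →ₐ[ℚ] ℂ := IsAlgClosed.lift with hφdef
  have hφ : Function.Injective φ := φ.toRingHom.injective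
  set ζ : K := IsCyclotomicExtension.zeta N ℚ K with hζdef
  have hζ : IsPrimitiveRoot ζ n := IsCyclotomicExtension.zeta_spec N ℚ K
  have hζC : IsPrimitiveRoot (φ ζ) n := hζ.map_of_injective hφ
  have hex : ∀ i : ι, ∃ a : ℕ, i ∈ t → φ ζ ^ a = f i := by
    intro i
    by_cases hi : i ∈ t
    · obtain ⟨a, _, ha⟩ := hζC.eq_pow_of_pow_eq_one (hf i hi)
      exact ⟨a, fun _ => ha⟩
    · exact ⟨0, fun h => absurd h hi⟩
  choose a ha using hex
  set F : ι → K := fun i => ζ ^ a i with hF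
  have hφF : ∀ i ∈ t, φ (F i) = f i := by
    intro i hi; show φ (ζ ^ a i) = f i; rw [map_pow]; exact ha i hi
  have hFn : ∀ i, F i ^ n = 1 := by
    intro i; show (ζ ^ a i) ^ n = 1
    rw [← pow_mul, mul_comm, pow_mul, hζ.pow_eq_one, one_pow]
  set z : K := ∑ i ∈ t, F i with hz
  have hφz : φ z = ∑ i ∈ t, f i := by
    rw [hz, map_sum]; exact Finset.sum_congr rfl hφF
  have hfix : ∀ σ : K ≃ₐ[ℚ] K, σ z = z := by
    intro σ
    have hco : ((hζ.autToPow ℚ σ : ZMod n)).val.Coprime n := ZMod.val_coe_unit_coprime _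
    have hspec := hζ.autToPow_spec ℚ σ
    set m := ((hζ.autToPow ℚ σ : ZMod n)).val with hmdef
    have hσF : ∀ i, σ (F i) = F i ^ m := by
      intro i
      show σ (ζ ^ a i) = (ζ ^ a i) ^ m
      rw [map_pow, ← hspec, pow_right_comm]
    apply hφ
    rw [hz, map_sum, map_sum]
    have : ∑ i ∈ t, φ (σ (F i)) = ∑ i ∈ t, f i ^ m := by
      refine Finset.sum_congr rfl fun i hi => ?_
      rw [hσF, map_pow, hφF i hi]
    rw [this, h m hco]
    exact hφz.symm
  have hbot : z ∈ (⊥ : IntermediateField ℚ K) := by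
    rw [← IsGalois.fixedField_fixingSubgroup (⊥ : IntermediateField ℚ K)]
    intro g
    exact hfix g
  obtain ⟨q, hq⟩ := IntermediateField.mem_bot.mp hbot
  have hζint : IsIntegral ℤ ζ := by
    refine ⟨X ^ n - 1, ?_, ?_⟩
    · simpa using monic_X_pow_sub_C (1 : ℤ) hn.ne'
    · simp [eval₂_sub, eval₂_pow, hζ.pow_eq_one]
  have hzint : IsIntegral ℤ z := by
    rw [hz]
    exact IsIntegral.sum _ fun i _ => hζint.pow _
  rw [← hq] at hzint
  have hqint : IsIntegral ℤ q :=
    (isIntegral_algebraMap_iff (algebraMap ℚ K).injective).mp hzint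
  obtain ⟨k, hk⟩ := IsIntegrallyClosed.isIntegral_iff.mp hqint
  refine ⟨k, ?_⟩
  rw [← hφz, ← hq, φ.commutes, ← hk]
  simp

end Cyclo

open scoped Classical in
noncomputable def Mmat {Γ : Type*} [AddCommGroup Γ] [Fintype Γ] (T : Set Γ) : Matrix Γ Γ ℂ :=
  Matrix.of fun a b => if a - b ∈ T then (1 : ℂ) else 0

open scoped Classical in
noncomputable def lam {Γ : Type*} [AddCommGroup Γ] [Fintype Γ] (χ : AddChar Γ ℂ) (T : Set Γ) : ℂ :=
  ∑ s ∈ T.toFinset, χ (-s)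

section MatrixLemmas

open Matrix
open scoped Classical

variable {Γ : Type*} [AddCommGroup Γ] [Fintype Γ]

lemma sum_ite_mem_toFinset (T : Set Γ) (g : Γ → ℂ) :
    ∑ x : Γ, (if x ∈ T then g x else 0) = ∑ x ∈ T.toFinset, g x := by
  rw [← Finset.sum_filter]
  congr 1
  ext x
  simp

lemma Mmat_mulVec (T : Set Γ) (χ : AddChar Γ ℂ) :
    Mmat T *ᵥ ⇑χ = lam χ T • ⇑χ := by
  funext a
  show ∑ b, (if a - b ∈ T then (1:ℂ) else 0) * χ b = _
  have h1 : ∀ b : Γ, (if a - b ∈ T then (1:ℂ) else 0) * χ b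
      = (if a - b ∈ T then χ b else 0) := by
    intro b; split <;> simp
  rw [Finset.sum_congr rfl fun b _ => h1 b]
  have h2 : ∑ b : Γ, (if a - b ∈ T then χ b else 0)
      = ∑ s : Γ, (if s ∈ T then χ (a - s) else 0) := by
    rw [← Equiv.sum_comp (Equiv.subLeft a) (fun s => if s ∈ T then χ (a - s) else 0)]
    refine Finset.sum_congr rfl fun b _ => ?_
    simp [Equiv.subLeft, sub_sub_cancel]
  rw [h2, sum_ite_mem_toFinset]
  have h3 : ∀ s : Γ, χ (a - s) = χ (-s) * χ a := by
    intro s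
    rw [sub_eq_add_neg, add_comm, AddChar.map_add_eq_mul]
  rw [Finset.sum_congr rfl fun s _ => h3 s, ← Finset.sum_mul]
  simp [lam, mul_comm]

lemma lam_mem_spectrum (T : Set Γ) (χ : AddChar Γ ℂ) :
    lam χ T ∈ spectrum ℂ (Mmat T) := by
  rw [spectrum.mem_iff]
  intro hU
  have h0 : (algebraMap ℂ (Matrix Γ Γ ℂ) (lam χ T) - Mmat T) *ᵥ ⇑χ = 0 := by
    rw [Matrix.sub_mulVec, Mmat_mulVec]
    have : algebraMap ℂ (Matrix Γ Γ ℂ) (lam χ T) *ᵥ ⇑χ = lam χ T • ⇑χ := by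
      rw [Algebra.algebraMap_eq_smul_one, Matrix.smul_mulVec, Matrix.one_mulVec]
    rw [this, sub_self]
  have hχ0 : (⇑χ : Γ → ℂ) = 0 := by
    calc (⇑χ : Γ → ℂ) = (1 : Matrix Γ Γ ℂ) *ᵥ ⇑χ := (Matrix.one_mulVec _).symm
      _ = ((↑hU.unit⁻¹ : Matrix Γ Γ ℂ) * (algebraMap ℂ (Matrix Γ Γ ℂ) (lam χ T) - Mmat T)) *ᵥ ⇑χ := by
          rw [← hU.unit.inv_mul]; rfl
      _ = (↑hU.unit⁻¹ : Matrix Γ Γ ℂ) *ᵥ ((algebraMap ℂ (Matrix Γ Γ ℂ) (lam χ T) - Mmat T) *ᵥ ⇑χ) := by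
          rw [Matrix.mulVec_mulVec]
      _ = 0 := by rw [h0, Matrix.mulVec_zero]
  have : (1 : ℂ) = 0 := by
    have := congrFun hχ0 0
    simpa [AddChar.map_zero_eq_one] using this
  exact one_ne_zero this

open Polynomial in
lemma spectrum_subset_lam (T : Set Γ) {μ : ℂ} (hμ : μ ∈ spectrum ℂ (Mmat T)) :
    ∃ χ : AddChar Γ ℂ, μ = lam χ T := by
  by_contra hc
  push_neg at hc
  set A := Mmat T with hA
  have poly_eig : ∀ (q : ℂ[X]) (χ : AddChar Γ ℂ),
      (aeval A q) *ᵥ ⇑χ = q.eval (lam χ T) • ⇑χ := by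
    intro q χ
    have hpow : ∀ k : ℕ, (A ^ k) *ᵥ ⇑χ = (lam χ T) ^ k • ⇑χ := by
      intro k
      induction k with
      | zero => simp [Matrix.one_mulVec]
      | succ k ih =>
        rw [pow_succ, ← Matrix.mulVec_mulVec, Mmat_mulVec, Matrix.mulVec_smul, ih,
          pow_succ, smul_smul, mul_comm]
    induction q using Polynomial.induction_on' with
    | add p q hp hq => rw [map_add, Matrix.add_mulVec, hp, hq, eval_add, add_smul]
    | monomial k c =>
      rw [aeval_monomial, eval_monomial, ← Matrix.mulVec_mulVec, hpow,
        Algebra.algebraMap_eq_smul_one, Matrix.smul_mulVec, Matrix.one_mulVec, smul_smul]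
  set p : ℂ[X] := ∏ χ : AddChar Γ ℂ, (X - C (lam χ T)) with hp
  have hp0 : aeval A p = 0 := by
    have : Matrix.toLin' (aeval A p) = Matrix.toLin' (0 : Matrix Γ Γ ℂ) := by
      rw [map_zero]
      apply Module.Basis.ext (AddChar.complexBasis Γ)
      intro χ
      rw [Matrix.toLin'_apply, LinearMap.zero_apply, AddChar.complexBasis_apply]
      have hfac : p = (X - C (lam χ T)) * ∏ χ' ∈ Finset.univ.erase χ, (X - C (lam χ' T)) :=
        (Finset.mul_prod_erase Finset.univ _ (Finset.mem_univ χ)).symm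
      rw [hfac, _root_.map_mul, ← Matrix.mulVec_mulVec, poly_eig, Matrix.mulVec_smul,
        map_sub, aeval_X, aeval_C, Matrix.sub_mulVec, Mmat_mulVec,
        Algebra.algebraMap_eq_smul_one, Matrix.smul_mulVec, Matrix.one_mulVec,
        sub_self, smul_zero]
    exact (Matrix.toLin').injective this
  have hpμ : p.eval μ ≠ 0 := by
    rw [hp, eval_prod]
    apply Finset.prod_ne_zero_iff.mpr
    intro χ _
    rw [eval_sub, eval_X, eval_C, sub_ne_zero]
    exact hc χ
  obtain ⟨q, hq⟩ := (X_sub_C_dvd_sub_C_eval (a := μ) (p := p))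
  have h1 : aeval A ((X - C μ) * q) = - algebraMap ℂ (Matrix Γ Γ ℂ) (p.eval μ) := by
    rw [← hq, map_sub, hp0, aeval_C, zero_sub]
  have hcomm : aeval A (X - C μ) * aeval A q = aeval A q * aeval A (X - C μ) := by
    rw [← _root_.map_mul, ← _root_.map_mul, mul_comm]
  set B := algebraMap ℂ (Matrix Γ Γ ℂ) μ - A with hB
  have hBeq : aeval A (X - C μ) = - B := by
    rw [map_sub, aeval_X, aeval_C, hB, neg_sub]
  set Cinv := (p.eval μ)⁻¹ • aeval A q with hC
  have h2 : B * Cinv = 1 := by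
    rw [hC, mul_smul_comm]
    have : B * aeval A q = algebraMap ℂ (Matrix Γ Γ ℂ) (p.eval μ) := by
      have := h1
      rw [_root_.map_mul, hBeq, neg_mul] at this
      linear_combination (norm := noncomm_ring) -this
    rw [this, Algebra.algebraMap_eq_smul_one, smul_smul, inv_mul_cancel₀ hpμ, one_smul]
  have h3 : Cinv * B = 1 := by
    rw [hC, smul_mul_assoc]
    have : aeval A q * B = algebraMap ℂ (Matrix Γ Γ ℂ) (p.eval μ) := by
      have h1' := h1
      rw [_root_.map_mul, hBeq] at h1'
      have hcomm' : aeval A q * (-B) = (-B) * aeval A q := by rw [← hBeq, ← hcomm]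
      rw [← hcomm'] at h1'
      linear_combination (norm := noncomm_ring) -h1'
    rw [this, Algebra.algebraMap_eq_smul_one, smul_smul, inv_mul_cancel₀ hpμ, one_smul]
  exact (spectrum.mem_iff.mp hμ) (isUnit_iff_exists.mpr ⟨Cinv, h2, h3⟩)

end MatrixLemmas

section InvLemmas

open scoped Classical

variable {Γ : Type*} [AddCommGroup Γ] [Fintype Γ]

lemma fourier_ext {w : Γ → ℂ} (hw : ∀ χ : AddChar Γ ℂ, ∑ g : Γ, w g * χ g = 0) :
    ∀ g, w g = 0 := by
  let L : (Γ → ℂ) →ₗ[ℂ] ℂ :=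
    { toFun := fun f => ∑ g : Γ, w g * f g
      map_add' := fun f g => by simp [mul_add, Finset.sum_add_distrib]
      map_smul' := fun c f => by
        simp only [Pi.smul_apply, smul_eq_mul, RingHom.id_apply, Finset.mul_sum]
        exact Finset.sum_congr rfl fun g _ => by ring }
  have hL : L = 0 := by
    apply Module.Basis.ext (AddChar.complexBasis Γ)
    intro χ
    rw [AddChar.complexBasis_apply, LinearMap.zero_apply]
    exact hw χ
  intro g
  have h : L (Pi.single g 1) = 0 := by rw [hL]; rfl
  have h2 : L (Pi.single g 1) = w g := by
    simp only [L, LinearMap.coe_mk, AddHom.coe_mk]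
    simp [Pi.single_apply, mul_ite, Finset.sum_ite_eq']
  exact h2.symm.trans h

lemma smul_left_inv {m : ℕ} (hm : m.Coprime (Fintype.card Γ)) :
    ∃ u : ℤ, ∀ x : Γ, u • (m • x) = x := by
  obtain ⟨a, b, hab⟩ := Nat.isCoprime_iff_coprime.mpr hm
  refine ⟨a, fun x => ?_⟩
  have hx : (Fintype.card Γ : ℤ) • x = 0 := by
    rw [natCast_zsmul]
    exact card_nsmul_eq_zero
  calc a • (m • x) = a • ((m : ℤ) • x) := by rw [natCast_zsmul]
    _ = (a * m) • x := by rw [← mul_smul]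
    _ = ((1 : ℤ) - b * (Fintype.card Γ : ℤ)) • x := by rw [show (a * m : ℤ) = 1 - b * Fintype.card Γ by linarith]
    _ = x - b • ((Fintype.card Γ : ℤ) • x) := by rw [sub_smul, one_smul, mul_smul]
    _ = x := by rw [hx, smul_zero, sub_zero]

lemma smul_nat_bijective {m : ℕ} (hm : m.Coprime (Fintype.card Γ)) :
    Function.Bijective (fun x : Γ => m • x) := by
  obtain ⟨u, hu⟩ := smul_left_inv hm
  have hinj : Function.Injective (fun x : Γ => m • x) :=
    Function.LeftInverse.injective (g := fun x => u • x) hu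
  exact Finite.injective_iff_bijective.mp hinj

lemma charroot (χ : AddChar Γ ℂ) (x : Γ) : χ x ^ (Fintype.card Γ) = 1 := by
  rw [← AddChar.map_nsmul_eq_pow, card_nsmul_eq_zero, AddChar.map_zero_eq_one]

lemma char_pow_smul (χ : AddChar Γ ℂ) (m : ℕ) (x : Γ) : χ (-x) ^ m = χ (-(m • x)) := by
  rw [← AddChar.map_nsmul_eq_pow, smul_neg]

lemma mem_smul_iff_of_int (T : Set Γ)
    (hT : ∀ χ : AddChar Γ ℂ, ∃ k : ℤ, lam χ T = (k : ℂ))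
    {m : ℕ} (hm : m.Coprime (Fintype.card Γ)) : ∀ x, x ∈ T ↔ m • x ∈ T := by
  have hn : 0 < Fintype.card Γ := Fintype.card_pos
  have h1 : ∀ χ : AddChar Γ ℂ, ∑ s ∈ T.toFinset, χ (-(m • s)) = lam χ T := by
    intro χ
    obtain ⟨k, hk⟩ := hT χ
    have := keyA T.toFinset hn (fun s => χ (-s)) (fun s _ => charroot χ (-s)) k hk hm
    rw [Finset.sum_congr rfl fun s _ => (char_pow_smul χ m s)] at this
    exact this
  obtain ⟨u, hu⟩ := smul_left_inv hm
  set e : Γ ≃ Γ := Equiv.ofBijective _ (smul_nat_bijective hm) with he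
  have hee : ∀ g : Γ, e g = m • g := fun g => rfl
  have h2 : ∀ χ : AddChar Γ ℂ,
      ∑ g : Γ, ((if e.symm g ∈ T then (1:ℂ) else 0) - (if g ∈ T then 1 else 0)) * χ (-g) = 0 := by
    intro χ
    have hL : ∑ g : Γ, (if e.symm g ∈ T then (1:ℂ) else 0) * χ (-g)
        = ∑ s ∈ T.toFinset, χ (-(m • s)) := by
      rw [← Equiv.sum_comp e (fun g => (if e.symm g ∈ T then (1:ℂ) else 0) * χ (-g))]
      have : ∀ g : Γ, (if e.symm (e g) ∈ T then (1:ℂ) else 0) * χ (-(e g))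
          = (if g ∈ T then χ (-(m • g)) else 0) := by
        intro g
        rw [Equiv.symm_apply_apply, hee]
        split <;> simp
      rw [Finset.sum_congr rfl fun g _ => this g, sum_ite_mem_toFinset]
    have hR : ∑ g : Γ, (if g ∈ T then (1:ℂ) else 0) * χ (-g) = lam χ T := by
      have : ∀ g : Γ, (if g ∈ T then (1:ℂ) else 0) * χ (-g)
          = (if g ∈ T then χ (-g) else 0) := by intro g; split <;> simp
      rw [Finset.sum_congr rfl fun g _ => this g, sum_ite_mem_toFinset]
      rfl
    have : ∀ g : Γ, ((if e.symm g ∈ T then (1:ℂ) else 0) - (if g ∈ T then 1 else 0)) * χ (-g)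
        = (if e.symm g ∈ T then (1:ℂ) else 0) * χ (-g) - (if g ∈ T then (1:ℂ) else 0) * χ (-g) := by
      intro g; ring
    rw [Finset.sum_congr rfl fun g _ => this g, Finset.sum_sub_distrib, hL, hR, h1 χ, sub_self]
  have h3 : ∀ g : Γ, ((if e.symm g ∈ T then (1:ℂ) else 0) - (if g ∈ T then 1 else 0)) = 0 := by
    apply fourier_ext
    intro ψ
    have hψ := h2 ψ⁻¹
    have heq : ∀ g : Γ, ((if e.symm g ∈ T then (1:ℂ) else 0) - (if g ∈ T then 1 else 0)) * ψ g
        = ((if e.symm g ∈ T then (1:ℂ) else 0) - (if g ∈ T then 1 else 0)) * ψ⁻¹ (-g) := by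
      intro g; rw [AddChar.inv_apply, neg_neg]
    rw [Finset.sum_congr rfl fun g _ => heq g]
    exact hψ
  intro x
  have hx := h3 (m • x)
  have hsx : e.symm (m • x) = x := by
    rw [← hee]
    exact e.symm_apply_apply x
  rw [hsx, sub_eq_zero] at hx
  constructor
  · intro hmem
    by_contra hc
    rw [if_pos hmem, if_neg hc] at hx
    exact one_ne_zero hx
  · intro hmem
    by_contra hc
    rw [if_neg hc, if_pos hmem] at hx
    exact zero_ne_one hx

lemma lam_int_of_inv (T : Set Γ)
    (hT : ∀ m : ℕ, m.Coprime (Fintype.card Γ) → ∀ x, (x ∈ T ↔ m • x ∈ T))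
    (χ : AddChar Γ ℂ) : ∃ k : ℤ, lam χ T = (k : ℂ) := by
  apply keyB T.toFinset Fintype.card_pos (fun s => χ (-s)) (fun s _ => charroot χ (-s))
  intro m hm
  have himg : T.toFinset.image (fun x => m • x) = T.toFinset := by
    ext y
    simp only [Finset.mem_image, Set.mem_toFinset]
    constructor
    · rintro ⟨x, hx, rfl⟩
      exact (hT m hm x).mp hx
    · intro hy
      obtain ⟨u, hu⟩ := smul_left_inv hm
      refine ⟨u • y, ?_, ?_⟩
      · have : m • (u • y) = y := by
          rw [smul_comm]
          exact hu y
        rw [hT m hm (u • y), this]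
        exact hy
      · rw [smul_comm]
        exact hu y
  calc ∑ s ∈ T.toFinset, χ (-s) ^ m = ∑ s ∈ T.toFinset, χ (-(m • s)) :=
        Finset.sum_congr rfl fun s _ => char_pow_smul χ m s
    _ = ∑ s ∈ T.toFinset.image (fun x => m • x), χ (-s) := by
        rw [Finset.sum_image]
        intro x _ y _ h
        exact (smul_nat_bijective hm).injective h
    _ = ∑ s ∈ T.toFinset, χ (-s) := by rw [himg]

end InvLemmas

section GraphLemmas

open scoped Classical

variable {V : Type*} {G : SimpleGraph V}

lemma dist_le_of_hom (φ : G →g G) {x y : V} (h : G.Reachable x y) :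
    G.dist (φ x) (φ y) ≤ G.dist x y := by
  obtain ⟨p, hp⟩ := h.exists_walk_length_eq_dist
  calc G.dist (φ x) (φ y) ≤ (p.map φ).length := SimpleGraph.dist_le _
    _ = p.length := SimpleGraph.Walk.length_map _ _
    _ = G.dist x y := hp

lemma eDist_hom_invariant (φ ψ : G →g G) (hinv : ∀ x, ψ (φ x) = x) (x y : V)
    [Decidable (G.Reachable (φ x) (φ y))] [Decidable (G.Reachable x y)] :
    (if G.Reachable (φ x) (φ y) then ((G.dist (φ x) (φ y) : ℕ∞)) else ⊤)
      = (if G.Reachable x y then ((G.dist x y : ℕ∞)) else ⊤) := by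
  have hr : G.Reachable (φ x) (φ y) ↔ G.Reachable x y := by
    constructor
    · intro h
      have := h.map ψ
      rwa [hinv, hinv] at this
    · exact fun h => h.map φ
  by_cases h : G.Reachable x y
  · rw [if_pos (hr.mpr h), if_pos h]
    have h1 := dist_le_of_hom φ h
    have h2 := dist_le_of_hom ψ (hr.mpr h)
    rw [hinv, hinv] at h2
    exact congrArg _ (le_antisymm h1 h2)
  · rw [if_neg (fun hc => h (hr.mp hc)), if_neg h]

end GraphLemmas

section InBLemmas

open scoped Classical

variable {Γ : Type*} [AddCommGroup Γ] [Fintype Γ]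

lemma InB.empty : InB Γ (∅ : Set Γ) := by
  have h := InB.compl (InB.subgroup (⊤ : AddSubgroup Γ))
  simpa using h

lemma InB.inter {S T : Set Γ} (hS : InB Γ S) (hT : InB Γ T) : InB Γ (S ∩ T) := by
  have h := InB.compl (InB.union (InB.compl hS) (InB.compl hT))
  simpa [Set.compl_union] using h

lemma InB.diff {S T : Set Γ} (hS : InB Γ S) (hT : InB Γ T) : InB Γ (S \ T) := by
  rw [Set.diff_eq]
  exact hS.inter (InB.compl hT)

lemma InB.biUnion {ι : Type*} (s : Finset ι) (f : ι → Set Γ)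
    (h : ∀ i ∈ s, InB Γ (f i)) : InB Γ (⋃ i ∈ s, f i) := by
  induction s using Finset.induction with
  | empty => simpa using InB.empty
  | @insert a s ha ih =>
    rw [Finset.set_biUnion_insert]
    exact InB.union (h a (Finset.mem_insert_self a s))
      (ih fun i hi => h i (Finset.mem_insert_of_mem hi))

lemma InB.atom (a : Γ) : InB Γ (Atom a) := by
  have heq : Atom a = (AddSubgroup.zmultiples a : Set Γ) \
      ⋃ b ∈ Finset.univ.filter
        (fun b : Γ => AddSubgroup.zmultiples b < AddSubgroup.zmultiples a),
        (AddSubgroup.zmultiples b : Set Γ) := by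
    ext x
    constructor
    · intro hx
      have hx' : AddSubgroup.zmultiples a = AddSubgroup.zmultiples x := hx
      constructor
      · rw [hx']
        exact AddSubgroup.mem_zmultiples x
      · intro hmem
        simp only [Set.mem_iUnion, Finset.mem_filter, Finset.mem_univ, true_and] at hmem
        obtain ⟨b, hb, hxb⟩ := hmem
        have : AddSubgroup.zmultiples x ≤ AddSubgroup.zmultiples b :=
          (AddSubgroup.zmultiples_le).mpr hxb
        rw [← hx'] at this
        exact absurd (lt_of_le_of_lt this hb) (lt_irrefl _)
    · rintro ⟨hxa, hxu⟩
      have hle : AddSubgroup.zmultiples x ≤ AddSubgroup.zmultiples a :=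
        (AddSubgroup.zmultiples_le).mpr hxa
      have hne : AddSubgroup.zmultiples x = AddSubgroup.zmultiples a := by
        by_contra hc
        have hlt : AddSubgroup.zmultiples x < AddSubgroup.zmultiples a := lt_of_le_of_ne hle hc
        apply hxu
        simp only [Set.mem_iUnion, Finset.mem_filter, Finset.mem_univ, true_and]
        exact ⟨x, hlt, AddSubgroup.mem_zmultiples x⟩
      exact hne.symm
  rw [heq]
  exact InB.diff (InB.subgroup _) (InB.biUnion _ _ fun b _ => InB.subgroup _)

lemma InB.of_atoms (S : Set Γ) (h : ∀ a ∈ S, Atom a ⊆ S) : InB Γ S := by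
  have hrepr : S = ⋃ a ∈ S.toFinset, Atom a := by
    ext x
    constructor
    · intro hx
      refine Set.mem_biUnion (Set.mem_toFinset.mpr hx) ?_
      exact (rfl : AddSubgroup.zmultiples x = AddSubgroup.zmultiples x)
    · intro hx
      simp only [Set.mem_iUnion] at hx
      obtain ⟨a, ha, hxa⟩ := hx
      exact h a (Set.mem_toFinset.mp ha) hxa
  rw [hrepr]
  exact InB.biUnion _ _ fun a _ => InB.atom a

lemma exists_nsmul_of_atom {a b : Γ} (h : AddSubgroup.zmultiples a = AddSubgroup.zmultiples b) :
    ∃ m : ℕ, m.Coprime (Fintype.card Γ) ∧ m • a = b := by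
  haveI : NeZero (Fintype.card Γ) := ⟨Fintype.card_pos.ne'⟩
  have hb : b ∈ AddSubgroup.zmultiples a := h ▸ AddSubgroup.mem_zmultiples b
  obtain ⟨j, hj⟩ := AddSubgroup.mem_zmultiples_iff.mp hb
  have ha : a ∈ AddSubgroup.zmultiples b := h.symm ▸ AddSubgroup.mem_zmultiples a
  obtain ⟨l, hl⟩ := AddSubgroup.mem_zmultiples_iff.mp ha
  set d := addOrderOf a with hd
  have hdvd : d ∣ Fintype.card Γ := addOrderOf_dvd_card
  haveI : NeZero d := ⟨(addOrderOf_pos a).ne'⟩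
  have h1 : (l * j - 1) • a = 0 := by
    rw [sub_smul, mul_smul, hj, hl, one_smul, sub_self]
  have h2 : (d : ℤ) ∣ (l * j - 1) := by
    rwa [addOrderOf_dvd_iff_zsmul_eq_zero]
  have h3 : ((l : ZMod d) * (j : ZMod d)) = 1 := by
    have h4 : ((l * j - 1 : ℤ) : ZMod d) = 0 := (ZMod.intCast_zmod_eq_zero_iff_dvd _ _).mpr h2
    push_cast at h4
    linear_combination h4
  have hju : IsUnit ((j : ℤ) : ZMod d) := IsUnit.of_mul_eq_one _ (by rw [mul_comm]; exact h3)
  obtain ⟨v, hv⟩ := ZMod.unitsMap_surjective hdvd hju.unit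
  refine ⟨(v : ZMod (Fintype.card Γ)).val, ZMod.val_coe_unit_coprime v, ?_⟩
  have h5 : ((((v : ZMod (Fintype.card Γ)).val : ℤ)) : ZMod d) = ((j : ℤ) : ZMod d) := by
    have h6 := congrArg (Units.val) hv
    rw [IsUnit.unit_spec] at h6
    rw [ZMod.unitsMap_def] at h6
    rw [Units.coe_map] at h6
    have h7 : ((v : ZMod (Fintype.card Γ)) : ZMod (Fintype.card Γ)) = (((v : ZMod (Fintype.card Γ)).val : ℕ) : ZMod (Fintype.card Γ)) :=
      (ZMod.natCast_rightInverse _).symm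
    have h6' : (ZMod.castHom hdvd (ZMod d)) ((v : ZMod (Fintype.card Γ))) = ((j:ℤ) : ZMod d) := h6
    rw [h7, map_natCast] at h6'
    push_cast
    push_cast at h6'
    exact h6'
  have h8 : (d : ℤ) ∣ (((v : ZMod (Fintype.card Γ)).val : ℤ) - j) := by
    rw [← ZMod.intCast_zmod_eq_zero_iff_dvd]
    push_cast
    rw [sub_eq_zero]
    push_cast at h5
    exact h5
  have h9 : (((v : ZMod (Fintype.card Γ)).val : ℤ) - j) • a = 0 := by
    rwa [← addOrderOf_dvd_iff_zsmul_eq_zero]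
  rw [sub_smul, sub_eq_zero, hj] at h9
  rw [← natCast_zsmul]
  exact h9

end InBLemmas

open scoped Classical in
theorem distance_power_of_integral_cayley {Γ : Type*} [AddCommGroup Γ] [Fintype Γ]
    (S : Set Γ) (hsym : -S = S)
    (hint : ∀ μ ∈ spectrum ℂ (Matrix.of fun a b : Γ => if a - b ∈ S then (1 : ℂ) else 0),
      ∃ k : ℤ, μ = (k : ℂ))
    (D : Set ℕ∞) :
    let G := SimpleGraph.fromRel (fun x y : Γ => x - y ∈ S)
    let eDist : Γ → Γ → ℕ∞ := fun x y =>
      if G.Reachable x y then (G.dist x y : ℕ∞) else ⊤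
    ∃ S' : Set Γ, InB Γ S' ∧ -S' = S' ∧
      (∀ x y : Γ, eDist x y ∈ D ↔ x - y ∈ S') ∧
      (∀ μ ∈ spectrum ℂ (Matrix.of fun x y : Γ => if eDist x y ∈ D then (1 : ℂ) else 0),
        ∃ k : ℤ, μ = (k : ℂ)) := by
  intro G eDist
  have hmemS : ∀ x : Γ, -x ∈ S ↔ x ∈ S := by
    intro x
    conv_lhs => rw [← hsym]
    exact Set.neg_mem_neg
  have hAdj : ∀ x y : Γ, G.Adj x y ↔ x ≠ y ∧ x - y ∈ S := by
    intro x y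
    show (SimpleGraph.fromRel fun x y : Γ => x - y ∈ S).Adj x y ↔ _
    rw [SimpleGraph.fromRel_adj]
    constructor
    · rintro ⟨hne, h | h⟩
      · exact ⟨hne, h⟩
      · refine ⟨hne, ?_⟩
        rw [← hmemS, neg_sub]
        exact h
    · rintro ⟨hne, h⟩
      exact ⟨hne, Or.inl h⟩
  have hM : ∀ χ : AddChar Γ ℂ, ∃ k : ℤ, lam χ S = (k : ℂ) := fun χ =>
    hint _ (lam_mem_spectrum S χ)
  have hSinv : ∀ m : ℕ, m.Coprime (Fintype.card Γ) → ∀ x : Γ, x ∈ S ↔ m • x ∈ S :=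
    fun m hm => mem_smul_iff_of_int S hM hm
  have hAut : ∀ (φ ψ : Γ → Γ), (∀ x, ψ (φ x) = x) →
      (∀ x y, G.Adj x y → G.Adj (φ x) (φ y)) → (∀ x y, G.Adj x y → G.Adj (ψ x) (ψ y)) →
      ∀ x y, eDist (φ x) (φ y) = eDist x y := by
    intro φ ψ hinv h1 h2 x y
    show (if G.Reachable (φ x) (φ y) then ((G.dist (φ x) (φ y) : ℕ∞)) else ⊤)
      = (if G.Reachable x y then ((G.dist x y : ℕ∞)) else ⊤)
    exact eDist_hom_invariant ⟨φ, fun {a b} h => h1 a b h⟩ ⟨ψ, fun {a b} h => h2 a b h⟩ hinv x y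
  have htrans : ∀ x y : Γ, eDist x y = eDist (x - y) 0 := by
    intro x y
    have hadj : ∀ (t : Γ) (a b : Γ), G.Adj a b → G.Adj (a + t) (b + t) := by
      intro t a b hab
      rw [hAdj] at hab ⊢
      refine ⟨fun hc => hab.1 (add_right_cancel hc), ?_⟩
      have h : a + t - (b + t) = a - b := by abel
      rw [h]
      exact hab.2
    have h := hAut (fun z => z + -y) (fun z => z + y) (fun z => by simp)
      (fun a b hab => hadj (-y) a b hab) (fun a b hab => hadj y a b hab) x y
    rw [← h]
    have e1 : x + -y = x - y := (sub_eq_add_neg x y).symm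
    have e2 : y + -y = (0 : Γ) := by simp
    rw [e1, e2]
  have hsmulE : ∀ m : ℕ, m.Coprime (Fintype.card Γ) → ∀ g : Γ, eDist (m • g) 0 = eDist g 0 := by
    intro m hm g
    obtain ⟨u, hu⟩ := smul_left_inv hm
    have hinj : Function.Injective (fun x : Γ => m • x) := (smul_nat_bijective hm).injective
    have h1 : ∀ a b : Γ, G.Adj a b → G.Adj (m • a) (m • b) := by
      intro a b hab
      rw [hAdj] at hab ⊢
      refine ⟨fun hc => hab.1 (hinj hc), ?_⟩
      rw [← smul_sub]
      exact (hSinv m hm (a - b)).mp hab.2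
    have h2 : ∀ a b : Γ, G.Adj a b → G.Adj (u • a) (u • b) := by
      intro a b hab
      rw [hAdj] at hab ⊢
      constructor
      · intro hc
        apply hab.1
        have h3 : m • (u • a) = m • (u • b) := by rw [hc]
        rwa [smul_comm m u a, smul_comm m u b, hu, hu] at h3
      · rw [← smul_sub]
        have hmu : m • (u • (a - b)) = a - b := by rw [smul_comm]; exact hu _
        rw [hSinv m hm (u • (a - b)), hmu]
        exact hab.2
    have h := hAut (fun z => m • z) (fun z => u • z) hu
      (fun a b hab => h1 a b hab) (fun a b hab => h2 a b hab) g 0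
    rw [← h, smul_zero]
  set S' : Set Γ := {g : Γ | eDist g 0 ∈ D} with hS'
  have hS'mem : ∀ g : Γ, g ∈ S' ↔ eDist g 0 ∈ D := fun g => Iff.rfl
  have hS'inv : ∀ m : ℕ, m.Coprime (Fintype.card Γ) → ∀ x : Γ, x ∈ S' ↔ m • x ∈ S' := by
    intro m hm x
    rw [hS'mem, hS'mem, hsmulE m hm x]
  have hiff : ∀ x y : Γ, eDist x y ∈ D ↔ x - y ∈ S' := by
    intro x y
    rw [htrans x y]
    exact Iff.rfl
  refine ⟨S', ?_, ?_, hiff, ?_⟩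
  · apply InB.of_atoms
    intro a ha b hb
    obtain ⟨m, hm, hmb⟩ := exists_nsmul_of_atom hb
    rw [← hmb]
    exact (hS'inv m hm a).mp ha
  · ext x
    rw [Set.mem_neg]
    have hnegAdj : ∀ a b : Γ, G.Adj a b → G.Adj (-a) (-b) := by
      intro a b hab
      rw [hAdj] at hab ⊢
      refine ⟨fun hc => hab.1 (neg_injective hc), ?_⟩
      have h : -a - -b = -(a - b) := by abel
      rw [h, hmemS]
      exact hab.2
    have h0 : eDist (-x) 0 = eDist x 0 := by
      have h := hAut (fun z => -z) (fun z => -z) (fun z => neg_neg z) hnegAdj hnegAdj x 0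
      rwa [neg_zero] at h
    rw [hS'mem, hS'mem, h0]
  · intro μ hμ
    have hMeq : (Matrix.of fun x y : Γ => if eDist x y ∈ D then (1 : ℂ) else 0) = Mmat S' := by
      ext x y
      show (if eDist x y ∈ D then (1 : ℂ) else 0) = (if x - y ∈ S' then (1 : ℂ) else 0)
      exact if_congr (hiff x y) rfl rfl
    rw [hMeq] at hμ
    obtain ⟨χ, rfl⟩ := spectrum_subset_lam S' hμ
    exact lam_int_of_inv S' (fun m hm x => hS'inv m hm x) χ
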